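/- Let d ≥ 2 be an integer, set α := (d−1)/2, and let Q be a finite set of unit vectors in ℝ^{d+1} such that no two distinct elements p, q ∈ Q satisfy p = q or p = −q. For ℓ ∈ ℕ let A_ℓ be the Q×Q matrix with entries A_ℓ(p,q) := C_ℓ^{(α)}(⟨p,q⟩)/C_ℓ^{(α)}(1). Then A_ℓ is real and symmetric with diagonal entries equal to 1, there exists C > 0 such that for all ℓ ≥ 1 and every p ∈ Q one has Σ_{q ∈ Q, q ≠ p} |A_ℓ(p,q)| ≤ C ℓ^{−(d−1)/2}, and consequently for all sufficiently large ℓ the matrix A_ℓ is strictly diagonally dominant and hence invertible. -/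

import Mathlib

open scoped Classical RealInnerProductSpace

/-- The Gegenbauer (ultraspherical) polynomial `C_ℓ^{(α)}`, as a function of `s`, defined
through Bonnet's recursion `(ℓ+1)C_{ℓ+1}(s) = 2(ℓ+α)s C_ℓ(s) − (ℓ+2α−1)C_{ℓ−1}(s)`
with `C₀ = 1`, `C₁(s) = 2αs`; this is the coefficient sequence of the generating
function `(1 − 2sx + x²)^{−α} = Σ_ℓ C_ℓ^{(α)}(s) x^ℓ`. -/
noncomputable def gegenbauer (α : ℝ) : ℕ → ℝ → ℝ
  | 0 => fun _ => 1
  | 1 => fun s => 2 * α * s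
  | (n + 2) => fun s =>
      (2 * ((n : ℝ) + 1 + α) * s * gegenbauer α (n + 1) s
        - ((n : ℝ) + 2 * α) * gegenbauer α n s) / ((n : ℝ) + 2)

/-- The `Q × Q` matrix `A_ℓ(p,q) = C_ℓ^{((d−1)/2)}(⟨p,q⟩)/C_ℓ^{((d−1)/2)}(1)` of
normalized Gegenbauer values on a finite set `Q` of unit vectors of `ℝ^{d+1}`. -/
noncomputable def gegenMatrix (d : ℕ) (Q : Finset (EuclideanSpace ℝ (Fin (d + 1))))
    (ℓ : ℕ) : Matrix Q Q ℝ :=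
  fun p q => gegenbauer (((d : ℝ) - 1) / 2) ℓ
      ⟪(p : EuclideanSpace ℝ (Fin (d + 1))), (q : EuclideanSpace ℝ (Fin (d + 1)))⟫
    / gegenbauer (((d : ℝ) - 1) / 2) ℓ 1

lemma gegen_one_succ (a : ℝ) (n : ℕ) :
    gegenbauer a (n+1) 1 = (((n:ℝ) + 2*a)/((n:ℝ)+1)) * gegenbauer a n 1 := by
  induction n with
  | zero => simp [gegenbauer]
  | succ n ih =>
    have h1 : ((n:ℝ)+1) ≠ 0 := by positivity
    have h2 : ((n:ℝ)+1+1) ≠ 0 := by positivity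
    show (2 * ((n : ℝ) + 1 + a) * 1 * gegenbauer a (n + 1) 1
        - ((n : ℝ) + 2 * a) * gegenbauer a n 1) / ((n : ℝ) + 2) = _
    rw [ih]
    push_cast
    field_simp
    ring

lemma gegen_one_pos {a : ℝ} (ha : 0 < a) (n : ℕ) : 0 < gegenbauer a n 1 := by
  induction n with
  | zero => simp [gegenbauer]
  | succ n ih =>
    rw [gegen_one_succ]
    have : 0 < ((n:ℝ) + 2*a)/((n:ℝ)+1) := by positivity
    exact mul_pos this ih
open Complex intervalIntegral

noncomputable def uu (s φ : ℝ) : ℂ :=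
  (s : ℂ) + (Real.sqrt (1 - s^2) : ℝ) * (Real.cos φ : ℝ) * Complex.I

noncomputable def hI (e : ℕ) (s : ℝ) (n : ℕ) : ℂ :=
  ∫ φ in (0:ℝ)..Real.pi, (uu s φ)^n * ((Real.sin φ : ℝ) : ℂ)^e

lemma integrand_cont (s : ℝ) (n e : ℕ) :
    Continuous fun φ => (uu s φ)^n * ((Real.sin φ : ℝ) : ℂ)^e := by
  unfold uu; fun_prop

lemma hasDerivAt_uu (s φ : ℝ) :
    HasDerivAt (fun φ => uu s φ)
      (-((Real.sqrt (1 - s^2) : ℝ) : ℂ) * ((Real.sin φ : ℝ) : ℂ) * Complex.I) φ := by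
  have h1 := (Real.hasDerivAt_cos φ).ofReal_comp (z := φ)
  have h2 := h1.const_mul ((Real.sqrt (1 - s^2) : ℝ) : ℂ)
  have h3 := h2.mul_const Complex.I
  have h4 := h3.const_add (s : ℂ)
  exact h4.congr_deriv (by push_cast; ring)

lemma hasDerivAt_Spow (φ : ℝ) (k : ℕ) :
    HasDerivAt (fun φ => ((Real.sin φ : ℝ) : ℂ)^(k+1))
      (((k:ℂ)+1) * ((Real.sin φ : ℝ) : ℂ)^k * ((Real.cos φ : ℝ) : ℂ)) φ := by
  have h1 : HasDerivAt (fun φ : ℝ => ((Real.sin φ : ℝ) : ℂ)) ((Real.cos φ : ℝ) : ℂ) φ :=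
    (Real.hasDerivAt_sin φ).ofReal_comp (z := φ)
  have h := (hasDerivAt_pow (k+1) (((Real.sin φ : ℝ) : ℂ))).comp φ h1
  exact h.congr_deriv (by push_cast; simp [Function.comp])

lemma hasDerivAt_upow (s φ : ℝ) (k : ℕ) :
    HasDerivAt (fun φ => (uu s φ)^(k+1))
      (((k:ℂ)+1) * (uu s φ)^k *
        (-((Real.sqrt (1 - s^2) : ℝ) : ℂ) * ((Real.sin φ : ℝ) : ℂ) * Complex.I)) φ := by
  have h := (hasDerivAt_pow (k+1) (uu s φ)).comp φ (hasDerivAt_uu s φ)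
  exact h.congr_deriv (by push_cast; simp [Function.comp])

lemma hI_rec (e : ℕ) (s : ℝ) (hs : s^2 ≤ 1) (n : ℕ) :
    ((n:ℂ) + e + 2) * hI e s (n+2)
      = (2*(n:ℂ) + e + 3) * s * hI e s (n+1) - ((n:ℂ) + 1) * hI e s n := by
  set c : ℝ := Real.sqrt (1 - s^2) with hc
  have hc2 : (c:ℂ)^2 = 1 - (s:ℂ)^2 := by
    have h' : c^2 = 1 - s^2 := Real.sq_sqrt (by linarith)
    have h1 : ((c^2 : ℝ) : ℂ) = ((1 - s^2 : ℝ) : ℂ) := by rw [h']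
    push_cast at h1
    exact h1
  set F' : ℝ → ℂ := fun φ =>
    ((n:ℂ)+1) * (uu s φ)^n * (-(c:ℂ) * ((Real.sin φ : ℝ):ℂ) * Complex.I)
        * ((Real.sin φ : ℝ):ℂ)^(e+1)
      + (uu s φ)^(n+1) * (((e:ℂ)+1) * ((Real.sin φ : ℝ):ℂ)^e * ((Real.cos φ : ℝ):ℂ))
    with hF'
  have hcontF' : Continuous F' := by
    rw [hF']; unfold uu; fun_prop
  have hFTC : (∫ φ in (0:ℝ)..Real.pi, F' φ) = 0 := by
    have hder : ∀ φ ∈ Set.uIcc (0:ℝ) Real.pi,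
        HasDerivAt (fun φ => (uu s φ)^(n+1) * ((Real.sin φ : ℝ):ℂ)^(e+1)) (F' φ) φ := by
      intro φ _
      exact (hasDerivAt_upow s φ n).mul (hasDerivAt_Spow φ e)
    rw [integral_eq_sub_of_hasDerivAt hder (hcontF'.intervalIntegrable _ _)]
    simp
  have key : ∀ φ : ℝ, ((c:ℂ) * Complex.I) * F' φ
      = ((n:ℂ)+1) * ((uu s φ)^n * ((Real.sin φ : ℝ):ℂ)^e)
        + ((n:ℂ)+e+2) * ((uu s φ)^(n+2) * ((Real.sin φ : ℝ):ℂ)^e)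
        - (2*(n:ℂ)+e+3) * s * ((uu s φ)^(n+1) * ((Real.sin φ : ℝ):ℂ)^e) := by
    intro φ
    have hco : (c:ℂ) * Complex.I * ((Real.cos φ : ℝ):ℂ) = uu s φ - s := by
      unfold uu; ring
    have hs2 : ((Real.sin φ : ℝ):ℂ)^2 = 1 - ((Real.cos φ : ℝ):ℂ)^2 := by
      rw [Complex.ofReal_sin, Complex.ofReal_cos]
      have h := Complex.sin_sq_add_cos_sq (φ:ℂ)
      linear_combination h
    rw [hF']
    set U := uu s φ
    set S := ((Real.sin φ : ℝ):ℂ)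
    set Co := ((Real.cos φ : ℝ):ℂ)
    set C := (c:ℂ)
    linear_combination
      (((n:ℂ)+1)*U^n*S^e*(C*Complex.I*Co + U - (s:ℂ)) + ((e:ℂ)+1)*U^(n+1)*S^e) * hco
      + ((n:ℂ)+1)*U^n*S^e * hc2
      - ((n:ℂ)+1)*U^n*S^e*C^2 * Complex.I_sq
      - ((n:ℂ)+1)*C^2*Complex.I^2*U^n*S^e * hs2
  have hint : ∀ k : ℕ, IntervalIntegrable
      (fun φ => (uu s φ)^k * ((Real.sin φ : ℝ):ℂ)^e) MeasureTheory.volume 0 Real.pi :=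
    fun k => (integrand_cont s k e).intervalIntegrable _ _
  have h0 : (∫ φ in (0:ℝ)..Real.pi, ((c:ℂ) * Complex.I) * F' φ) = 0 := by
    rw [intervalIntegral.integral_const_mul, hFTC, mul_zero]
  rw [intervalIntegral.integral_congr (g := fun φ =>
      ((n:ℂ)+1) * ((uu s φ)^n * ((Real.sin φ : ℝ):ℂ)^e)
        + ((n:ℂ)+e+2) * ((uu s φ)^(n+2) * ((Real.sin φ : ℝ):ℂ)^e)
        - (2*(n:ℂ)+e+3) * s * ((uu s φ)^(n+1) * ((Real.sin φ : ℝ):ℂ)^e))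
      (fun φ _ => key φ)] at h0
  rw [intervalIntegral.integral_sub, intervalIntegral.integral_add] at h0
  · rw [intervalIntegral.integral_const_mul, intervalIntegral.integral_const_mul,
      intervalIntegral.integral_const_mul] at h0
    show ((n:ℂ) + e + 2) * hI e s (n+2)
      = (2*(n:ℂ) + e + 3) * s * hI e s (n+1) - ((n:ℂ) + 1) * hI e s n
    unfold hI
    linear_combination h0
  · exact ((hint n).const_mul _)
  · exact ((hint (n+2)).const_mul _)
  · exact (((hint n).const_mul _).add ((hint (n+2)).const_mul _))
  · exact ((hint (n+1)).const_mul _)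

lemma hI_one (e : ℕ) (s : ℝ) : hI e s 1 = (s:ℂ) * hI e s 0 := by
  have hcos : (∫ φ in (0:ℝ)..Real.pi,
      ((Real.cos φ : ℝ):ℂ) * ((Real.sin φ : ℝ):ℂ)^e) = 0 := by
    have h1 : (∫ φ in (0:ℝ)..Real.pi,
        (((e:ℂ)+1) * ((Real.sin φ : ℝ):ℂ)^e * ((Real.cos φ : ℝ):ℂ))) = 0 := by
      rw [integral_eq_sub_of_hasDerivAt (fun φ _ => hasDerivAt_Spow φ e)
        ((by fun_prop : Continuous fun φ : ℝ =>
          (((e:ℂ)+1) * ((Real.sin φ : ℝ):ℂ)^e * ((Real.cos φ : ℝ):ℂ))).intervalIntegrable _ _)]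
      simp
    have h2 : (∫ φ in (0:ℝ)..Real.pi,
        (((e:ℂ)+1) * ((Real.sin φ : ℝ):ℂ)^e * ((Real.cos φ : ℝ):ℂ)))
        = ((e:ℂ)+1) * ∫ φ in (0:ℝ)..Real.pi,
          ((Real.cos φ : ℝ):ℂ) * ((Real.sin φ : ℝ):ℂ)^e := by
      rw [← intervalIntegral.integral_const_mul]
      apply intervalIntegral.integral_congr
      intro φ _
      ring
    have he1 : ((e:ℂ)+1) ≠ 0 := by
      have := Nat.cast_add_one_ne_zero (R := ℂ) e
      exact_mod_cast this
    rw [h2] at h1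
    exact (mul_eq_zero.mp h1).resolve_left he1
  unfold hI
  have hsplit : (∫ φ in (0:ℝ)..Real.pi, (uu s φ)^1 * ((Real.sin φ : ℝ):ℂ)^e)
      = ∫ φ in (0:ℝ)..Real.pi,
        ((s:ℂ) * ((uu s φ)^0 * ((Real.sin φ : ℝ):ℂ)^e)
          + ((Real.sqrt (1-s^2):ℝ):ℂ) * Complex.I
              * (((Real.cos φ : ℝ):ℂ) * ((Real.sin φ : ℝ):ℂ)^e)) := by
    apply intervalIntegral.integral_congr
    intro φ _
    unfold uu
    ring
  rw [hsplit, intervalIntegral.integral_add, intervalIntegral.integral_const_mul,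
    intervalIntegral.integral_const_mul, hcos]
  · ring
  · exact ((continuous_const.mul (integrand_cont s 0 e)).intervalIntegrable _ _)
  · exact ((by fun_prop : Continuous fun φ : ℝ =>
      ((Real.sqrt (1-s^2):ℝ):ℂ) * Complex.I
        * (((Real.cos φ : ℝ):ℂ) * ((Real.sin φ : ℝ):ℂ)^e)).intervalIntegrable _ _)

open Complex intervalIntegral in
lemma gegen_hI (e : ℕ) (s : ℝ) (hs : s^2 ≤ 1) : ∀ n : ℕ,
    (gegenbauer (((e:ℝ)+1)/2) n s : ℂ) * hI e s 0
      = (gegenbauer (((e:ℝ)+1)/2) n 1 : ℂ) * hI e s n := by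
  intro n
  induction n using Nat.twoStepInduction with
  | zero => simp [gegenbauer]
  | one =>
    show ((2 * (((e:ℝ)+1)/2) * s : ℝ) : ℂ) * hI e s 0
      = ((2 * (((e:ℝ)+1)/2) * 1 : ℝ) : ℂ) * hI e s 1
    rw [hI_one]
    push_cast
    ring
  | more n ih1 ih2 =>
    have hrec := hI_rec e s hs n
    have hsucc : ((n:ℂ)+1) * (gegenbauer (((e:ℝ)+1)/2) (n+1) 1 : ℝ)
        = ((n:ℂ)+e+1) * (gegenbauer (((e:ℝ)+1)/2) n 1 : ℝ) := by
      have h := gegen_one_succ (((e:ℝ)+1)/2) n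
      have hne : ((n:ℝ)+1) ≠ 0 := by positivity
      have h2 : ((n:ℝ)+1) * gegenbauer (((e:ℝ)+1)/2) (n+1) 1
          = ((n:ℝ)+e+1) * gegenbauer (((e:ℝ)+1)/2) n 1 := by
        field_simp at h
        linear_combination h
      have h3 := congrArg (Complex.ofReal) h2
      push_cast at h3 ⊢
      linear_combination h3
    show ((( 2 * ((n : ℝ) + 1 + ((e:ℝ)+1)/2) * s * gegenbauer (((e:ℝ)+1)/2) (n + 1) s
        - ((n : ℝ) + 2 * (((e:ℝ)+1)/2)) * gegenbauer (((e:ℝ)+1)/2) n s) / ((n : ℝ) + 2) : ℝ) : ℂ)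
        * hI e s 0
      = ((( 2 * ((n : ℝ) + 1 + ((e:ℝ)+1)/2) * 1 * gegenbauer (((e:ℝ)+1)/2) (n + 1) 1
        - ((n : ℝ) + 2 * (((e:ℝ)+1)/2)) * gegenbauer (((e:ℝ)+1)/2) n 1) / ((n : ℝ) + 2) : ℝ) : ℂ)
        * hI e s (n+2)
    push_cast
    set A := (gegenbauer (((e:ℝ)+1)/2) (n+1) 1 : ℂ)
    set B := (gegenbauer (((e:ℝ)+1)/2) n 1 : ℂ)
    have hn2 : ((n:ℂ)+2) ≠ 0 := by
      have : ((n:ℝ)+2) ≠ 0 := by positivity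
      exact_mod_cast this
    field_simp
    linear_combination ((2*(n:ℂ)+e+3) * s) * ih2 - ((n:ℂ)+e+1) * ih1
      - (hI e s (n+2) - hI e s n) * hsucc - A * hrec

lemma J_bound (e : ℕ) (b : ℝ) (hb : 0 < b) (hb2 : b ≤ 1/2) :
    ∃ C : ℝ, 0 < C ∧ ∀ n : ℕ, 1 ≤ n →
      (∫ φ in (0:ℝ)..Real.pi, (1 - b * Real.sin φ^2)^n * Real.sin φ^e)
        ≤ C * (n:ℝ) ^ (-((e:ℝ)+1)/2) := by
  set K : ℝ := (Nat.factorial (e+1)) * (Real.pi^2/(4*b))^(e+1) with hK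
  have hπ := Real.pi_pos
  have hKpos : 0 < K := by
    have : (0:ℝ) < Nat.factorial (e+1) := by positivity
    positivity
  refine ⟨2 * (1 + K), by positivity, ?_⟩
  intro n hn
  set t : ℝ := (n:ℝ) ^ (-(1:ℝ)/2) with ht
  have hn0 : (0:ℝ) < n := by exact_mod_cast hn
  have htpos : 0 < t := Real.rpow_pos_of_pos hn0 _
  have ht1 : t ≤ 1 := Real.rpow_le_one_of_one_le_of_nonpos (by exact_mod_cast hn) (by norm_num)
  have htpi : t ≤ Real.pi/2 := le_trans ht1 (by linarith [Real.pi_gt_three])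
  set f : ℝ → ℝ := fun φ => (1 - b * Real.sin φ^2)^n * Real.sin φ^e with hf
  have hfc : Continuous f := by fun_prop
  have hbase : ∀ φ : ℝ, 0 ≤ 1 - b * Real.sin φ^2 ∧ 1 - b * Real.sin φ^2 ≤ 1 := by
    intro φ
    have h1 : Real.sin φ^2 ≤ 1 := Real.sin_sq_le_one φ
    have h2 : 0 ≤ Real.sin φ^2 := sq_nonneg _
    constructor <;> nlinarith
  have hsym : (∫ φ in (Real.pi/2)..Real.pi, f φ) = ∫ φ in (0:ℝ)..(Real.pi/2), f φ := by
    have h1 : (∫ φ in (Real.pi/2)..Real.pi, f (Real.pi - φ))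
        = ∫ φ in (Real.pi - Real.pi)..(Real.pi - Real.pi/2), f φ :=
      intervalIntegral.integral_comp_sub_left f Real.pi
    have h2 : (∫ φ in (Real.pi/2)..Real.pi, f (Real.pi - φ))
        = ∫ φ in (Real.pi/2)..Real.pi, f φ := by
      apply intervalIntegral.integral_congr
      intro φ _
      simp [hf, Real.sin_pi_sub]
    rw [h2] at h1
    have h3 : Real.pi - Real.pi/2 = Real.pi/2 := by ring
    rw [h1, sub_self, h3]
  have hsplit : (∫ φ in (0:ℝ)..Real.pi, f φ)
      = (∫ φ in (0:ℝ)..(Real.pi/2), f φ) + ∫ φ in (Real.pi/2)..Real.pi, f φ :=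
    (integral_add_adjacent_intervals (hfc.intervalIntegrable _ _)
      (hfc.intervalIntegrable _ _)).symm
  have hsplit2 : (∫ φ in (0:ℝ)..(Real.pi/2), f φ)
      = (∫ φ in (0:ℝ)..t, f φ) + ∫ φ in t..(Real.pi/2), f φ :=
    (integral_add_adjacent_intervals (hfc.intervalIntegrable _ _)
      (hfc.intervalIntegrable _ _)).symm
  have hhead : (∫ φ in (0:ℝ)..t, f φ) ≤ (n:ℝ) ^ (-((e:ℝ)+1)/2) := by
    have hmono : (∫ φ in (0:ℝ)..t, f φ) ≤ ∫ φ in (0:ℝ)..t, φ^e := by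
      apply intervalIntegral.integral_mono_on htpos.le (hfc.intervalIntegrable _ _)
        ((continuous_pow e).intervalIntegrable _ _)
      intro φ hφ
      have h0φ : 0 ≤ φ := hφ.1
      have hφπ : φ ≤ Real.pi := le_trans hφ.2 (le_trans htpi (by linarith))
      have hsin0 : 0 ≤ Real.sin φ := Real.sin_nonneg_of_nonneg_of_le_pi h0φ hφπ
      have hsinφ : Real.sin φ ≤ φ := Real.sin_le h0φ
      calc (1 - b * Real.sin φ^2)^n * Real.sin φ^e
          ≤ 1 * φ^e := by
            apply mul_le_mul
            · exact pow_le_one₀ (hbase φ).1 (hbase φ).2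
            · exact pow_le_pow_left₀ hsin0 hsinφ e
            · positivity
            · norm_num
        _ = φ^e := one_mul _
    have hval : (∫ φ in (0:ℝ)..t, φ^e) = t^(e+1)/(e+1) := by
      rw [integral_pow]; norm_num
    have htval : t^(e+1) = (n:ℝ) ^ (-((e:ℝ)+1)/2) := by
      rw [ht, ← Real.rpow_natCast ((n:ℝ) ^ (-(1:ℝ)/2)) (e+1), ← Real.rpow_mul hn0.le]
      congr 1
      push_cast
      ring
    have hds : t^(e+1)/(e+1) ≤ t^(e+1) := by
      apply div_le_self (by positivity)
      exact_mod_cast Nat.one_le_iff_ne_zero.mpr (Nat.succ_ne_zero e)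
    calc (∫ φ in (0:ℝ)..t, f φ) ≤ t^(e+1)/(e+1) := by rw [← hval]; exact hmono
      _ ≤ t^(e+1) := hds
      _ = _ := htval
  have htail_pt : ∀ φ ∈ Set.Icc t (Real.pi/2),
      f φ ≤ (K / (n:ℝ)^(e+1)) * φ^(-((e:ℤ)+2)) := by
    intro φ hφ
    have hφpos : 0 < φ := lt_of_lt_of_le htpos hφ.1
    have hφπ2 : φ ≤ Real.pi/2 := hφ.2
    have hφπ : φ ≤ Real.pi := by linarith
    have hsin0 : 0 ≤ Real.sin φ := Real.sin_nonneg_of_nonneg_of_le_pi hφpos.le hφπ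
    have hjordan : 2/Real.pi * φ ≤ Real.sin φ := Real.mul_le_sin hφpos.le hφπ2
    have hyle : b * (2/Real.pi * φ)^2 ≤ b * Real.sin φ^2 := by
      apply mul_le_mul_of_nonneg_left _ hb.le
      apply pow_le_pow_left₀ (by positivity) hjordan
    set y : ℝ := b * (2/Real.pi * φ)^2 with hy
    have hypos : 0 < y := by positivity
    have hexp1 : (1 - b * Real.sin φ^2)^n ≤ Real.exp (-((n:ℝ) * y)) := by
      have h1 : 1 - b * Real.sin φ^2 ≤ Real.exp (-y) := by
        have h3 := Real.add_one_le_exp (-y)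
        have h2 : 1 - b * Real.sin φ^2 ≤ 1 - y := by linarith
        linarith
      calc (1 - b * Real.sin φ^2)^n ≤ (Real.exp (-y))^n :=
            pow_le_pow_left₀ (hbase φ).1 h1 n
        _ = Real.exp (-((n:ℝ) * y)) := by
            rw [← Real.exp_nat_mul]; ring_nf
    have hfact : ((n:ℝ)*y)^(e+1) / (Nat.factorial (e+1)) ≤ Real.exp ((n:ℝ)*y) :=
      Real.pow_div_factorial_le_exp _ (by positivity) (e+1)
    have hexp2 : Real.exp (-((n:ℝ) * y)) ≤ (Nat.factorial (e+1)) / ((n:ℝ) * y)^(e+1) := by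
      have h2 : ((n:ℝ)*y)^(e+1) ≤ (Nat.factorial (e+1)) * Real.exp ((n:ℝ)*y) := by
        rw [div_le_iff₀ (by positivity)] at hfact
        linarith
      rw [Real.exp_neg, le_div_iff₀ (by positivity : (0:ℝ) < ((n:ℝ)*y)^(e+1)),
        inv_mul_le_iff₀ (Real.exp_pos _)]
      nlinarith [Real.exp_pos ((n:ℝ)*y)]
    have hsinle : Real.sin φ^e ≤ φ^e := pow_le_pow_left₀ hsin0 (Real.sin_le hφpos.le) e
    have key1 : f φ ≤ (Nat.factorial (e+1)) / ((n:ℝ)*y)^(e+1) * φ^e := by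
      calc f φ ≤ Real.exp (-((n:ℝ)*y)) * φ^e := by
            apply mul_le_mul hexp1 hsinle (by positivity) (Real.exp_pos _).le
        _ ≤ _ := mul_le_mul_of_nonneg_right hexp2 (by positivity)
    have hfin : (Nat.factorial (e+1) : ℝ) / ((n:ℝ)*y)^(e+1) * φ^e
        = K / (n:ℝ)^(e+1) * φ^(-((e:ℤ)+2)) := by
      have hφzpow : φ^(-((e:ℤ)+2)) = φ^e / φ^(2*(e+1)) := by
        rw [eq_div_iff (by positivity : (φ:ℝ)^(2*(e+1)) ≠ 0),
          ← zpow_natCast φ (2*(e+1)), ← zpow_add₀ hφpos.ne', ← zpow_natCast φ e]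
        congr 1
        push_cast
        ring
      have hyval : ((n:ℝ)*y) = (n:ℝ) * (4*b/Real.pi^2) * φ^2 := by
        rw [hy]; field_simp; ring
      rw [hφzpow, hyval, hK]
      rw [div_pow, mul_pow, mul_pow, div_pow, mul_pow, ← pow_mul]
      field_simp
      ring
    rw [hfin] at key1
    exact key1
  have hcont_tail : ContinuousOn (fun φ : ℝ => (K / (n:ℝ)^(e+1)) * φ^(-((e:ℤ)+2)))
      (Set.uIcc t (Real.pi/2)) := by
    apply ContinuousOn.mul continuousOn_const
    apply ContinuousOn.zpow₀ continuousOn_id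
    intro x hx
    left
    rw [Set.uIcc_of_le htpi] at hx
    exact ne_of_gt (lt_of_lt_of_le htpos hx.1)
  have htail : (∫ φ in t..(Real.pi/2), f φ) ≤ K * (n:ℝ)^(-((e:ℝ)+1)/2) := by
    have hmono : (∫ φ in t..(Real.pi/2), f φ)
        ≤ ∫ φ in t..(Real.pi/2), (K / (n:ℝ)^(e+1)) * φ^(-((e:ℤ)+2)) := by
      apply intervalIntegral.integral_mono_on htpi (hfc.intervalIntegrable _ _)
        (hcont_tail.intervalIntegrable)
      intro φ hφ
      exact htail_pt φ hφ
    have hzero : (0:ℝ) ∉ Set.uIcc t (Real.pi/2) := by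
      rw [Set.uIcc_of_le htpi]
      intro hmem
      exact absurd hmem.1 (not_le.mpr htpos)
    have hval : (∫ φ in t..(Real.pi/2), φ^(-((e:ℤ)+2)))
        = ((Real.pi/2)^(-((e:ℤ)+2)+1) - t^(-((e:ℤ)+2)+1))/((-((e:ℤ)+2)+1):ℝ) := by
      rw [integral_zpow]
      · norm_num
      · right
        exact ⟨by omega, hzero⟩
    have hX : (0:ℝ) ≤ (Real.pi/2)^(-((e:ℤ)+2)+1) := zpow_nonneg (by positivity) _
    have hY : (0:ℝ) ≤ t^(-((e:ℤ)+2)+1) := zpow_nonneg htpos.le _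
    have hvle : (∫ φ in t..(Real.pi/2), φ^(-((e:ℤ)+2))) ≤ t^(-((e:ℤ)+2)+1) := by
      rw [hval]
      have hden : (-((((e:ℤ)):ℝ) + 2) + 1) = -((e:ℝ)+1) := by push_cast; ring
      rw [hden]
      calc ((Real.pi/2)^(-((e:ℤ)+2)+1) - t^(-((e:ℤ)+2)+1))/(-((e:ℝ)+1))
          = (t^(-((e:ℤ)+2)+1) - (Real.pi/2)^(-((e:ℤ)+2)+1))/((e:ℝ)+1) := by
            rw [div_neg]; ring
        _ ≤ t^(-((e:ℤ)+2)+1)/((e:ℝ)+1) := by gcongr; linarith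
        _ ≤ t^(-((e:ℤ)+2)+1) := div_le_self hY (by push_cast; linarith)
    have hq : (K/(n:ℝ)^(e+1)) * t^(-((e:ℤ)+2)+1) = K * (n:ℝ)^(-((e:ℝ)+1)/2) := by
      have h1 : t^(-((e:ℤ)+2)+1) = (n:ℝ)^(((e:ℝ)+1)/2) := by
        rw [ht, ← Real.rpow_intCast ((n:ℝ)^(-(1:ℝ)/2)) _, ← Real.rpow_mul hn0.le]
        congr 1
        push_cast
        ring
      have h2 : ((n:ℝ)^(e+1) : ℝ) = (n:ℝ)^(((e:ℝ)+1):ℝ) := by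
        rw [← Real.rpow_natCast (n:ℝ) (e+1)]
        congr 1
        push_cast
        ring
      rw [h1, h2, div_mul_eq_mul_div, mul_div_assoc, ← Real.rpow_sub hn0]
      congr 1
      ring
    calc (∫ φ in t..(Real.pi/2), f φ)
        ≤ ∫ φ in t..(Real.pi/2), (K / (n:ℝ)^(e+1)) * φ^(-((e:ℤ)+2)) := hmono
      _ = (K / (n:ℝ)^(e+1)) * ∫ φ in t..(Real.pi/2), φ^(-((e:ℤ)+2)) :=
          intervalIntegral.integral_const_mul _ _
      _ ≤ (K / (n:ℝ)^(e+1)) * t^(-((e:ℤ)+2)+1) := by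
          apply mul_le_mul_of_nonneg_left hvle (by positivity)
      _ = K * (n:ℝ)^(-((e:ℝ)+1)/2) := hq
  have hrpow_pos : (0:ℝ) < (n:ℝ)^(-((e:ℝ)+1)/2) := Real.rpow_pos_of_pos hn0 _
  rw [hsplit, hsym, hsplit2]
  linarith

open Complex intervalIntegral in
lemma norm_hI_le (e n : ℕ) (s r : ℝ) (hsr : |s| ≤ r) (hr1 : r < 1) :
    ‖hI e s n‖ ≤ ∫ φ in (0:ℝ)..Real.pi,
      (1 - ((1-r^2)/2) * Real.sin φ^2)^n * Real.sin φ^e := by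
  have habs := abs_le.mp hsr
  have hs2 : s^2 ≤ r^2 := sq_le_sq' (by linarith) habs.2
  have hr2 : r^2 < 1 := by nlinarith [abs_nonneg s, le_trans (abs_nonneg s) hsr]
  set b : ℝ := (1-r^2)/2 with hb
  have hc2 : Real.sqrt (1 - s^2)^2 = 1 - s^2 := Real.sq_sqrt (by nlinarith)
  calc ‖hI e s n‖
      ≤ ∫ φ in (0:ℝ)..Real.pi, ‖(uu s φ)^n * ((Real.sin φ : ℝ):ℂ)^e‖ :=
        intervalIntegral.norm_integral_le_integral_norm Real.pi_pos.le
    _ ≤ ∫ φ in (0:ℝ)..Real.pi, (1 - b * Real.sin φ^2)^n * Real.sin φ^e := by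
        apply intervalIntegral.integral_mono_on Real.pi_pos.le
          ((integrand_cont s n e).norm.intervalIntegrable _ _)
          ((by fun_prop : Continuous fun φ =>
            (1 - b * Real.sin φ^2)^n * Real.sin φ^e).intervalIntegrable _ _)
        intro φ hφ
        have hsin0 : 0 ≤ Real.sin φ := Real.sin_nonneg_of_nonneg_of_le_pi hφ.1 hφ.2
        have hnu : ‖uu s φ‖ ≤ 1 - b * Real.sin φ^2 := by
          have huu : uu s φ = (s:ℂ) + ((Real.sqrt (1-s^2) * Real.cos φ : ℝ):ℂ) * Complex.I := by
            unfold uu; push_cast; ring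
          rw [huu, Complex.norm_add_mul_I]
          have hcos := Real.sin_sq_add_cos_sq φ
          have hsin1 : Real.sin φ^2 ≤ 1 := Real.sin_sq_le_one φ
          have h1 : s^2 + (Real.sqrt (1-s^2) * Real.cos φ)^2
              ≤ (1 - b * Real.sin φ^2)^2 := by
            have hx : (Real.sqrt (1-s^2) * Real.cos φ)^2
                = (1 - s^2) * (1 - Real.sin φ^2) := by
              rw [mul_pow, hc2]
              nlinarith
            rw [hx, hb]
            nlinarith [sq_nonneg (Real.sin φ), sq_nonneg (Real.sin φ^2),
              mul_nonneg (sub_nonneg.mpr hs2) (sq_nonneg (Real.sin φ)),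
              sq_nonneg ((1-r^2)/2*Real.sin φ^2)]
          calc Real.sqrt (s^2 + (Real.sqrt (1-s^2) * Real.cos φ)^2)
              ≤ Real.sqrt ((1 - b * Real.sin φ^2)^2) := Real.sqrt_le_sqrt h1
            _ = 1 - b * Real.sin φ^2 := Real.sqrt_sq (by nlinarith)
        calc ‖(uu s φ)^n * ((Real.sin φ : ℝ):ℂ)^e‖
            = ‖uu s φ‖^n * ‖((Real.sin φ : ℝ):ℂ)‖^e := by
              rw [norm_mul, norm_pow, norm_pow]
          _ = ‖uu s φ‖^n * Real.sin φ^e := by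
              rw [Complex.norm_real, Real.norm_eq_abs, _root_.abs_of_nonneg hsin0]
          _ ≤ (1 - b * Real.sin φ^2)^n * Real.sin φ^e := by
              apply mul_le_mul_of_nonneg_right
                (pow_le_pow_left₀ (norm_nonneg _) hnu n) (by positivity)

open Complex intervalIntegral in
lemma hI_zero_eq (e : ℕ) (s : ℝ) :
    hI e s 0 = ((∫ φ in (0:ℝ)..Real.pi, Real.sin φ^e : ℝ) : ℂ) := by
  unfold hI
  rw [← intervalIntegral.integral_ofReal]
  apply intervalIntegral.integral_congr
  intro φ _
  push_cast
  ring

lemma h0_pos (e : ℕ) : 0 < ∫ φ in (0:ℝ)..Real.pi, Real.sin φ^e := by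
  apply intervalIntegral.intervalIntegral_pos_of_pos_on
  · exact (by fun_prop : Continuous fun φ => Real.sin φ^e).intervalIntegrable _ _
  · intro x hx
    exact pow_pos (Real.sin_pos_of_pos_of_lt_pi hx.1 hx.2) e
  · exact Real.pi_pos

lemma gegen_ratio (e : ℕ) (r : ℝ) (hr0 : 0 ≤ r) (hr1 : r < 1) :
    ∃ C : ℝ, 0 < C ∧ ∀ s : ℝ, |s| ≤ r → ∀ n : ℕ, 1 ≤ n →
      |gegenbauer (((e:ℝ)+1)/2) n s|
        ≤ C * (n:ℝ)^(-((e:ℝ)+1)/2) * gegenbauer (((e:ℝ)+1)/2) n 1 := by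
  have hb : 0 < (1-r^2)/2 := by nlinarith
  have hb2 : (1-r^2)/2 ≤ 1/2 := by nlinarith
  obtain ⟨CJ, hCJ, hJ⟩ := J_bound e ((1-r^2)/2) hb hb2
  have hH0 := h0_pos e
  set H0 : ℝ := ∫ φ in (0:ℝ)..Real.pi, Real.sin φ^e with hH0def
  refine ⟨CJ / H0, by positivity, ?_⟩
  intro s hs n hn
  have hs1 : s^2 ≤ 1 := by nlinarith [abs_le.mp hs, abs_nonneg s]
  have hkey := gegen_hI e s hs1 n
  have hG1 := gegen_one_pos (by positivity : (0:ℝ) < ((e:ℝ)+1)/2) n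
  have h1 : |gegenbauer (((e:ℝ)+1)/2) n s| * H0
      = gegenbauer (((e:ℝ)+1)/2) n 1 * ‖hI e s n‖ := by
    have := congrArg norm hkey
    simp only [norm_mul, hI_zero_eq, Complex.norm_real, Real.norm_eq_abs] at this
    rw [abs_of_pos hH0, abs_of_pos hG1] at this
    exact this
  have h2 : ‖hI e s n‖ ≤ CJ * (n:ℝ)^(-((e:ℝ)+1)/2) :=
    le_trans (norm_hI_le e n s r hs hr1) (hJ n hn)
  have h3 : |gegenbauer (((e:ℝ)+1)/2) n s| * H0
      ≤ gegenbauer (((e:ℝ)+1)/2) n 1 * (CJ * (n:ℝ)^(-((e:ℝ)+1)/2)) := by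
    rw [h1]
    exact mul_le_mul_of_nonneg_left h2 hG1.le
  rw [← le_div_iff₀ hH0] at h3
  calc |gegenbauer (((e:ℝ)+1)/2) n s|
      ≤ gegenbauer (((e:ℝ)+1)/2) n 1 * (CJ * (n:ℝ)^(-((e:ℝ)+1)/2)) / H0 := h3
    _ = CJ / H0 * (n:ℝ)^(-((e:ℝ)+1)/2) * gegenbauer (((e:ℝ)+1)/2) n 1 := by ring

lemma isUnit_of_sdd {ι : Type*} [Fintype ι] [DecidableEq ι] (M : Matrix ι ι ℝ)
    (h : ∀ p, (∑ q ∈ Finset.univ.erase p, |M p q|) < |M p p|) : IsUnit M := by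
  rw [Matrix.isUnit_iff_isUnit_det, isUnit_iff_ne_zero]
  intro hdet
  obtain ⟨v, hv0, hMv⟩ := Matrix.exists_mulVec_eq_zero_iff.mpr hdet
  obtain ⟨i, hi⟩ : ∃ i, v i ≠ 0 := Function.ne_iff.mp hv0
  obtain ⟨p, -, hp⟩ := Finset.exists_max_image Finset.univ (fun j => |v j|)
    ⟨i, Finset.mem_univ i⟩
  have hvp : 0 < |v p| := lt_of_lt_of_le (abs_pos.mpr hi) (hp i (Finset.mem_univ i))
  have hrow : (∑ q, M p q * v q) = 0 := by
    have := congrFun hMv p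
    simpa [Matrix.mulVec, dotProduct] using this
  have hsum := Finset.add_sum_erase Finset.univ (fun q => M p q * v q) (Finset.mem_univ p)
  have hsplit : M p p * v p = -∑ q ∈ Finset.univ.erase p, M p q * v q := by
    rw [hrow] at hsum
    linarith
  have hle : |M p p| * |v p| ≤ (∑ q ∈ Finset.univ.erase p, |M p q|) * |v p| := by
    calc |M p p| * |v p| = |M p p * v p| := (abs_mul _ _).symm
      _ = |∑ q ∈ Finset.univ.erase p, M p q * v q| := by rw [hsplit, abs_neg]
      _ ≤ ∑ q ∈ Finset.univ.erase p, |M p q * v q| := Finset.abs_sum_le_sum_abs _ _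
      _ = ∑ q ∈ Finset.univ.erase p, |M p q| * |v q| := by
          apply Finset.sum_congr rfl; intro q _; rw [abs_mul]
      _ ≤ ∑ q ∈ Finset.univ.erase p, |M p q| * |v p| := by
          apply Finset.sum_le_sum; intro q _
          exact mul_le_mul_of_nonneg_left (hp q (Finset.mem_univ q)) (abs_nonneg _)
      _ = (∑ q ∈ Finset.univ.erase p, |M p q|) * |v p| := by rw [Finset.sum_mul]
  have := mul_lt_mul_of_pos_right (h p) hvp
  linarith


set_option maxHeartbeats 2000000 in
/-- For `d ≥ 2` and a finite set `Q` of pairwise non-antipodal distinct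
unit vectors in `ℝ^{d+1}`, the matrices `A_ℓ(p,q) = C_ℓ^{(α)}(⟨p,q⟩)/C_ℓ^{(α)}(1)` with
`α = (d−1)/2` are symmetric with unit diagonal, their off-diagonal row sums are
`O(ℓ^{−(d−1)/2})`, and for all large `ℓ` they are strictly diagonally dominant and
invertible. -/
theorem stmt_18 (d : ℕ) (hd : 2 ≤ d)
    (Q : Finset (EuclideanSpace ℝ (Fin (d + 1))))
    (hQ1 : ∀ q ∈ Q, ‖q‖ = 1)
    (hQ2 : ∀ p ∈ Q, ∀ q ∈ Q, p ≠ q → p ≠ -q) :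
    (∀ ℓ : ℕ, (∀ p q : Q, gegenMatrix d Q ℓ p q = gegenMatrix d Q ℓ q p) ∧
      ∀ p : Q, gegenMatrix d Q ℓ p p = 1) ∧
    (∃ C : ℝ, 0 < C ∧ ∀ ℓ : ℕ, 1 ≤ ℓ → ∀ p : Q,
      (∑ q ∈ Finset.univ.erase p, |gegenMatrix d Q ℓ p q|)
        ≤ C * (ℓ : ℝ) ^ (-((d : ℝ) - 1) / 2)) ∧
    (∃ N : ℕ, ∀ ℓ : ℕ, N ≤ ℓ →
      (∀ p : Q, (∑ q ∈ Finset.univ.erase p, |gegenMatrix d Q ℓ p q|)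
          < |gegenMatrix d Q ℓ p p|) ∧
      IsUnit (gegenMatrix d Q ℓ)) := by

  obtain ⟨e, rfl⟩ : ∃ e, d = e + 2 := ⟨d - 2, by omega⟩
  have hα : ((((e+2:ℕ)):ℝ) - 1)/2 = ((e:ℝ)+1)/2 := by push_cast; ring
  have hαpos : (0:ℝ) < ((((e+2:ℕ)):ℝ) - 1)/2 := by
    rw [hα]; positivity
  have hG1pos : ∀ ℓ : ℕ, 0 < gegenbauer (((((e+2:ℕ)):ℝ) - 1)/2) ℓ 1 :=
    fun ℓ => gegen_one_pos hαpos ℓ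
  -- Part 1
  have part1 : ∀ ℓ : ℕ,
      (∀ p q : Q, gegenMatrix (e+2) Q ℓ p q = gegenMatrix (e+2) Q ℓ q p) ∧
      ∀ p : Q, gegenMatrix (e+2) Q ℓ p p = 1 := by
    intro ℓ
    constructor
    · intro p q
      simp only [gegenMatrix]
      rw [real_inner_comm]
    · intro p
      simp only [gegenMatrix]
      have hpp : ⟪(p : EuclideanSpace ℝ (Fin (e+2+1))), (p : EuclideanSpace ℝ (Fin (e+2+1)))⟫ = 1 := by
        rw [real_inner_self_eq_norm_sq, hQ1 _ p.2]
        norm_num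
      rw [hpp]
      exact div_self (hG1pos ℓ).ne'
  -- The constant r
  set S : Set ℝ := {x | ∃ p ∈ Q, ∃ q ∈ Q, p ≠ q ∧
    x = |⟪(p : EuclideanSpace ℝ (Fin (e+2+1))), (q : EuclideanSpace ℝ (Fin (e+2+1)))⟫|} with hS
  have hSfin : S.Finite := by
    have hsub : S ⊆ (fun pq : EuclideanSpace ℝ (Fin (e+2+1)) × EuclideanSpace ℝ (Fin (e+2+1)) =>
        |⟪pq.1, pq.2⟫|) '' ((Q : Set _) ×ˢ (Q : Set _)) := by
      rintro x ⟨p, hp, q, hq, -, rfl⟩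
      exact ⟨(p,q), ⟨hp,hq⟩, rfl⟩
    exact Set.Finite.subset
      (Set.Finite.image _ (Set.Finite.prod Q.finite_toSet Q.finite_toSet)) hsub
  have hfin' : (insert (0:ℝ) S).Finite := hSfin.insert 0
  have hne' : (insert (0:ℝ) S).Nonempty := ⟨0, Set.mem_insert 0 S⟩
  set r : ℝ := sSup (insert (0:ℝ) S) with hr
  have hr0 : 0 ≤ r := le_csSup hfin'.bddAbove (Set.mem_insert _ _)
  have hrmem : r ∈ insert (0:ℝ) S := hne'.csSup_mem hfin'
  have hr1 : r < 1 := by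
    rcases Set.mem_insert_iff.mp hrmem with h0 | hmem
    · rw [h0]; norm_num
    · obtain ⟨p, hp, q, hq, hne, hx⟩ := hmem
      rw [hx]
      have hn1 : ‖(p : EuclideanSpace ℝ (Fin (e+2+1)))‖ = 1 := hQ1 _ hp
      have hn2 : ‖(q : EuclideanSpace ℝ (Fin (e+2+1)))‖ = 1 := hQ1 _ hq
      have hub : ⟪(p : EuclideanSpace ℝ (Fin (e+2+1))), (q : EuclideanSpace ℝ (Fin (e+2+1)))⟫ < 1 :=
        (inner_lt_one_iff_real_of_norm_eq_one hn1 hn2).mpr hne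
      have hlb : -1 < ⟪(p : EuclideanSpace ℝ (Fin (e+2+1))), (q : EuclideanSpace ℝ (Fin (e+2+1)))⟫ := by
        have hnneg : ‖(-q : EuclideanSpace ℝ (Fin (e+2+1)))‖ = 1 := by rw [norm_neg]; exact hn2
        have hne2 : (p : EuclideanSpace ℝ (Fin (e+2+1))) ≠ -q := hQ2 _ hp _ hq hne
        have hlt := (inner_lt_one_iff_real_of_norm_eq_one hn1 hnneg).mpr hne2
        rw [inner_neg_right] at hlt
        linarith
      exact abs_lt.mpr ⟨hlb, hub⟩
  have hmemr : ∀ p ∈ Q, ∀ q ∈ Q, p ≠ q →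
      |⟪(p : EuclideanSpace ℝ (Fin (e+2+1))), (q : EuclideanSpace ℝ (Fin (e+2+1)))⟫| ≤ r := by
    intro p hp q hq hne
    exact le_csSup hfin'.bddAbove (Set.mem_insert_of_mem _ ⟨p, hp, q, hq, hne, rfl⟩)
  obtain ⟨Cr, hCr, hCrb⟩ := gegen_ratio e r hr0 hr1
  have hexp : ∀ ℓ : ℕ, (ℓ : ℝ) ^ (-((((e+2:ℕ)):ℝ) - 1)/2) = (ℓ:ℝ) ^ (-((e:ℝ)+1)/2) := by
    intro ℓ
    congr 1
    push_cast
    ring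
  -- per entry bound
  have hentry : ∀ ℓ : ℕ, 1 ≤ ℓ → ∀ p q : Q,
      (p:EuclideanSpace ℝ (Fin (e+2+1))) ≠ (q:EuclideanSpace ℝ (Fin (e+2+1))) →
      |gegenMatrix (e+2) Q ℓ p q| ≤ Cr * (ℓ:ℝ) ^ (-((e:ℝ)+1)/2) := by
    intro ℓ hℓ p q hne
    simp only [gegenMatrix]
    rw [abs_div, abs_of_pos (hG1pos ℓ), div_le_iff₀ (hG1pos ℓ), hα]
    exact hCrb _ (hmemr _ p.2 _ q.2 hne) ℓ hℓ
  have part2 : ∀ ℓ : ℕ, 1 ≤ ℓ → ∀ p : Q,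
      (∑ q ∈ Finset.univ.erase p, |gegenMatrix (e+2) Q ℓ p q|)
        ≤ (((Q.card : ℝ)+1) * Cr) * (ℓ : ℝ) ^ (-((((e+2:ℕ)):ℝ) - 1)/2) := by
    intro ℓ hℓ p
    rw [hexp ℓ]
    have hrp : (0:ℝ) ≤ (ℓ:ℝ) ^ (-((e:ℝ)+1)/2) := Real.rpow_nonneg (Nat.cast_nonneg ℓ) _
    calc (∑ q ∈ Finset.univ.erase p, |gegenMatrix (e+2) Q ℓ p q|)
        ≤ ∑ _q ∈ Finset.univ.erase p, Cr * (ℓ:ℝ) ^ (-((e:ℝ)+1)/2) := by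
          apply Finset.sum_le_sum
          intro q hq
          apply hentry ℓ hℓ p q
          have : p ≠ q := (Finset.ne_of_mem_erase hq).symm
          exact fun h => this (Subtype.coe_injective h)
      _ = ((Finset.univ.erase p).card : ℝ) * (Cr * (ℓ:ℝ) ^ (-((e:ℝ)+1)/2)) := by
          rw [Finset.sum_const, nsmul_eq_mul]
      _ ≤ (((Q.card : ℝ)+1)) * (Cr * (ℓ:ℝ) ^ (-((e:ℝ)+1)/2)) := by
          apply mul_le_mul_of_nonneg_right _ (by positivity)
          have hcard : (Finset.univ.erase p).card ≤ Q.card := by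
            calc (Finset.univ.erase p).card ≤ (Finset.univ : Finset Q).card :=
                  Finset.card_erase_le
              _ = Q.card := by rw [Finset.card_univ, Fintype.card_coe]
          calc ((Finset.univ.erase p).card : ℝ) ≤ (Q.card : ℝ) := by exact_mod_cast hcard
            _ ≤ (Q.card : ℝ) + 1 := by linarith
      _ = (((Q.card : ℝ)+1) * Cr) * (ℓ:ℝ) ^ (-((e:ℝ)+1)/2) := by ring
  refine ⟨part1, ⟨((Q.card : ℝ)+1) * Cr, by positivity, part2⟩, ?_⟩
  -- Part 3
  have htend : Filter.Tendsto (fun ℓ : ℕ =>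
      (((Q.card : ℝ)+1) * Cr) * (ℓ:ℝ) ^ (-((((e+2:ℕ)):ℝ) - 1)/2)) Filter.atTop (nhds 0) := by
    have h1 : Filter.Tendsto (fun x : ℝ => x ^ (-((((e+2:ℕ)):ℝ) - 1)/2))
        Filter.atTop (nhds 0) := by
      have h0 := tendsto_rpow_neg_atTop hαpos
      have heq : (fun x : ℝ => x ^ (-((((e+2:ℕ)):ℝ) - 1)/2))
          = fun x : ℝ => x ^ (-(((((e+2:ℕ)):ℝ) - 1)/2)) := by
        funext x; congr 1; ring
      rw [heq]
      exact h0
    have h2 := h1.comp (tendsto_natCast_atTop_atTop (R := ℝ))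
    have h3 := h2.const_mul (((Q.card : ℝ)+1) * Cr)
    simpa using h3
  have hev : ∀ᶠ ℓ : ℕ in Filter.atTop,
      (((Q.card : ℝ)+1) * Cr) * (ℓ:ℝ) ^ (-((((e+2:ℕ)):ℝ) - 1)/2) < 1 :=
    htend.eventually_lt_const (by norm_num)
  obtain ⟨N, hN⟩ := Filter.eventually_atTop.mp (hev.and (Filter.eventually_ge_atTop 1))
  refine ⟨N, fun ℓ hℓ => ?_⟩
  obtain ⟨hlt, hℓ1⟩ := hN ℓ hℓ
  have hsdd : ∀ p : Q, (∑ q ∈ Finset.univ.erase p, |gegenMatrix (e+2) Q ℓ p q|)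
      < |gegenMatrix (e+2) Q ℓ p p| := by
    intro p
    rw [(part1 ℓ).2 p, abs_one]
    exact lt_of_le_of_lt (part2 ℓ hℓ1 p) hlt
  exact ⟨hsdd, isUnit_of_sdd _ hsdd⟩
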